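/- Fix a real number Ω and define the polynomial map G = (G₃, G₄, G₅) : ℝ³ → ℝ³ by G₃(A,B,D) = (40A³ + 45AB² − 30A + 15√3·B²D + 56πΩ²·A) / (14√(5π)), G₄(A,B,D) = (2/7)·(8A² + 6B² + 3)·Ω² + 15/(28π) + (4/5)·π·Ω⁴, and G₅(A,B,D) = √5·( 75·(8A³ + 9AB² − 6A + 3√3·B²D) + 220·(8A³ + 9AB² + 3√3·B²D)·Ω²·π + 1056·A·Ω⁴·π² ) / (924·π^{3/2}). Then for all (A,B,D) ∈ ℝ³, the determinant of the Jacobian matrix of G at (A,B,D) equals 480√3·B³·Ω⁴·(44πΩ² − 15) / (3773π). In particular, the Jacobian of G at (A,B,D) is invertible whenever B ≠ 0, Ω ≠ 0 and Ω² ≠ 15/(44π). -/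

import Mathlib

open Real

lemma deriv_cubic (p q r c : ℝ) (x : ℝ) :
    deriv (fun a : ℝ => (p * a ^ 3 + q * a + r) / c) x = (3 * p * x ^ 2 + q) / c := by
  have h1 : HasDerivAt (fun a : ℝ => p * a ^ 3 + q * a + r) (3 * p * x ^ 2 + q) x := by
    have h := (((hasDerivAt_pow 3 x).const_mul p).add
      (((hasDerivAt_id x).const_mul q).add_const r))
    convert h using 1
    · exact rfl
    · exact rfl
    · funext a; simp only [id, Pi.add_apply]; ring
    · push_cast; ring
  exact (h1.div_const c).deriv

lemma deriv_quad (p q c : ℝ) (x : ℝ) :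
    deriv (fun a : ℝ => (p * a ^ 2 + q) / c) x = 2 * p * x / c := by
  have h1 : HasDerivAt (fun a : ℝ => p * a ^ 2 + q) (2 * p * x) x := by
    have h := ((hasDerivAt_pow 2 x).const_mul p).add_const q
    convert h using 1
    · exact rfl
    · exact rfl
    push_cast; ring
  exact (h1.div_const c).deriv

lemma deriv_lin (p q c : ℝ) (x : ℝ) :
    deriv (fun a : ℝ => (p * a + q) / c) x = p / c := by
  have h1 : HasDerivAt (fun a : ℝ => p * a + q) p x := by
    simpa using ((hasDerivAt_id x).const_mul p).add_const q
  exact (h1.div_const c).deriv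

/-- First component `G₃` of the reduced Casimir map. -/
noncomputable def G3 (Ω A B D : ℝ) : ℝ :=
  (40 * A ^ 3 + 45 * A * B ^ 2 - 30 * A + 15 * Real.sqrt 3 * B ^ 2 * D +
    56 * π * Ω ^ 2 * A) / (14 * Real.sqrt (5 * π))

/-- Second component `G₄` of the reduced Casimir map. -/
noncomputable def G4 (Ω A B D : ℝ) : ℝ :=
  (2 / 7) * (8 * A ^ 2 + 6 * B ^ 2 + 3) * Ω ^ 2 + 15 / (28 * π) + (4 / 5) * π * Ω ^ 4

/-- Third component `G₅` of the reduced Casimir map. -/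
noncomputable def G5 (Ω A B D : ℝ) : ℝ :=
  Real.sqrt 5 *
    (75 * (8 * A ^ 3 + 9 * A * B ^ 2 - 6 * A + 3 * Real.sqrt 3 * B ^ 2 * D) +
      220 * (8 * A ^ 3 + 9 * A * B ^ 2 + 3 * Real.sqrt 3 * B ^ 2 * D) * Ω ^ 2 * π +
      1056 * A * Ω ^ 4 * π ^ 2) / (924 * π ^ ((3 : ℝ) / 2))

/-- The Jacobian matrix of `G = (G₃, G₄, G₅)` with respect to `(A, B, D)`. -/
noncomputable def jacG (Ω A B D : ℝ) : Matrix (Fin 3) (Fin 3) ℝ :=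
  Matrix.of
    ![![deriv (fun a => G3 Ω a B D) A, deriv (fun b => G3 Ω A b D) B,
        deriv (fun d => G3 Ω A B d) D],
      ![deriv (fun a => G4 Ω a B D) A, deriv (fun b => G4 Ω A b D) B,
        deriv (fun d => G4 Ω A B d) D],
      ![deriv (fun a => G5 Ω a B D) A, deriv (fun b => G5 Ω A b D) B,
        deriv (fun d => G5 Ω A B d) D]]

lemma jacG_det_eq (Ω A B D : ℝ) : (jacG Ω A B D).det =
      480 * Real.sqrt 3 * B ^ 3 * Ω ^ 4 * (44 * π * Ω ^ 2 - 15) / (3773 * π) := by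
  have hp0 : (0:ℝ) < π := pi_pos
  have hsp : Real.sqrt π ^ 2 = π := Real.sq_sqrt hp0.le
  have h3 : Real.sqrt 3 ^ 2 = 3 := Real.sq_sqrt (by norm_num)
  have h5 : Real.sqrt 5 ^ 2 = 5 := Real.sq_sqrt (by norm_num)
  have hsp0 : (0:ℝ) < Real.sqrt π := Real.sqrt_pos.mpr hp0
  have hs50 : (0:ℝ) < Real.sqrt 5 := Real.sqrt_pos.mpr (by norm_num)
  have hc : Real.sqrt (5 * π) = Real.sqrt 5 * Real.sqrt π := Real.sqrt_mul (by norm_num) _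
  have hd : π ^ ((3:ℝ)/2) = π * Real.sqrt π := by
    rw [show (3:ℝ)/2 = 1 + 1/2 by norm_num, Real.rpow_add hp0, Real.rpow_one,
      Real.sqrt_eq_rpow]
  have e00 : deriv (fun a => G3 Ω a B D) A =
      (120 * A ^ 2 + (45 * B ^ 2 - 30 + 56 * π * Ω ^ 2)) / (14 * Real.sqrt (5 * π)) := by
    rw [show (fun a => G3 Ω a B D) = fun a : ℝ =>
      (40 * a ^ 3 + (45 * B ^ 2 - 30 + 56 * π * Ω ^ 2) * a + 15 * Real.sqrt 3 * B ^ 2 * D) /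
        (14 * Real.sqrt (5 * π)) from by funext a; unfold G3; ring, deriv_cubic]
    ring
  have e01 : deriv (fun b => G3 Ω A b D) B =
      2 * (45 * A + 15 * Real.sqrt 3 * D) * B / (14 * Real.sqrt (5 * π)) := by
    rw [show (fun b => G3 Ω A b D) = fun b : ℝ =>
      ((45 * A + 15 * Real.sqrt 3 * D) * b ^ 2 + (40 * A ^ 3 - 30 * A + 56 * π * Ω ^ 2 * A)) /
        (14 * Real.sqrt (5 * π)) from by funext b; unfold G3; ring, deriv_quad]
  have e02 : deriv (fun d => G3 Ω A B d) D =
      15 * Real.sqrt 3 * B ^ 2 / (14 * Real.sqrt (5 * π)) := by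
    rw [show (fun d => G3 Ω A B d) = fun d : ℝ =>
      (15 * Real.sqrt 3 * B ^ 2 * d + (40 * A ^ 3 + 45 * A * B ^ 2 - 30 * A + 56 * π * Ω ^ 2 * A)) /
        (14 * Real.sqrt (5 * π)) from by funext d; unfold G3; ring, deriv_lin]
  have e10 : deriv (fun a => G4 Ω a B D) A = 2 * (16 / 7 * Ω ^ 2) * A / 1 := by
    rw [show (fun a => G4 Ω a B D) = fun a : ℝ =>
      ((16 / 7 * Ω ^ 2) * a ^ 2 + ((2/7) * (6 * B ^ 2 + 3) * Ω ^ 2 + 15 / (28 * π) + (4/5) * π * Ω ^ 4)) / 1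
      from by funext a; unfold G4; ring, deriv_quad]
  have e11 : deriv (fun b => G4 Ω A b D) B = 2 * (12 / 7 * Ω ^ 2) * B / 1 := by
    rw [show (fun b => G4 Ω A b D) = fun b : ℝ =>
      ((12 / 7 * Ω ^ 2) * b ^ 2 + ((2/7) * (8 * A ^ 2 + 3) * Ω ^ 2 + 15 / (28 * π) + (4/5) * π * Ω ^ 4)) / 1
      from by funext b; unfold G4; ring, deriv_quad]
  have e12 : deriv (fun d => G4 Ω A B d) D = 0 / 1 := by
    rw [show (fun d => G4 Ω A B d) = fun d : ℝ =>
      (0 * d + ((2/7) * (8 * A ^ 2 + 6 * B ^ 2 + 3) * Ω ^ 2 + 15 / (28 * π) + (4/5) * π * Ω ^ 4)) / 1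
      from by funext d; unfold G4; ring, deriv_lin]
  have e20 : deriv (fun a => G5 Ω a B D) A =
      (3 * (Real.sqrt 5 * (600 + 1760 * Ω ^ 2 * π)) * A ^ 2 +
        Real.sqrt 5 * (675 * B ^ 2 - 450 + 1980 * B ^ 2 * Ω ^ 2 * π + 1056 * Ω ^ 4 * π ^ 2)) /
        (924 * π ^ ((3:ℝ)/2)) := by
    rw [show (fun a => G5 Ω a B D) = fun a : ℝ =>
      ((Real.sqrt 5 * (600 + 1760 * Ω ^ 2 * π)) * a ^ 3 +
        (Real.sqrt 5 * (675 * B ^ 2 - 450 + 1980 * B ^ 2 * Ω ^ 2 * π + 1056 * Ω ^ 4 * π ^ 2)) * a +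
        Real.sqrt 5 * (225 * Real.sqrt 3 * B ^ 2 * D + 660 * Real.sqrt 3 * B ^ 2 * D * Ω ^ 2 * π)) /
        (924 * π ^ ((3:ℝ)/2)) from by funext a; unfold G5; ring, deriv_cubic]
  have e21 : deriv (fun b => G5 Ω A b D) B =
      2 * (Real.sqrt 5 * (675 * A + 225 * Real.sqrt 3 * D + (1980 * A + 660 * Real.sqrt 3 * D) * Ω ^ 2 * π)) * B /
        (924 * π ^ ((3:ℝ)/2)) := by
    rw [show (fun b => G5 Ω A b D) = fun b : ℝ =>
      ((Real.sqrt 5 * (675 * A + 225 * Real.sqrt 3 * D + (1980 * A + 660 * Real.sqrt 3 * D) * Ω ^ 2 * π)) * b ^ 2 +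
        Real.sqrt 5 * (600 * A ^ 3 - 450 * A + 1760 * A ^ 3 * Ω ^ 2 * π + 1056 * A * Ω ^ 4 * π ^ 2)) /
        (924 * π ^ ((3:ℝ)/2)) from by funext b; unfold G5; ring, deriv_quad]
  have e22 : deriv (fun d => G5 Ω A B d) D =
      (Real.sqrt 5 * (225 * Real.sqrt 3 * B ^ 2 + 660 * Real.sqrt 3 * B ^ 2 * Ω ^ 2 * π)) /
        (924 * π ^ ((3:ℝ)/2)) := by
    rw [show (fun d => G5 Ω A B d) = fun d : ℝ =>
      ((Real.sqrt 5 * (225 * Real.sqrt 3 * B ^ 2 + 660 * Real.sqrt 3 * B ^ 2 * Ω ^ 2 * π)) * d +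
        Real.sqrt 5 * (600 * A ^ 3 + 675 * A * B ^ 2 - 450 * A + (1760 * A ^ 3 + 1980 * A * B ^ 2) * Ω ^ 2 * π +
          1056 * A * Ω ^ 4 * π ^ 2)) / (924 * π ^ ((3:ℝ)/2))
      from by funext d; unfold G5; ring, deriv_lin]
  rw [jacG, Matrix.det_fin_three]
  simp only [Matrix.of_apply, Matrix.cons_val', Matrix.cons_val_zero, Matrix.cons_val_one,
    Matrix.head_cons, Matrix.empty_val', Matrix.cons_val_fin_one, Matrix.head_fin_const,
    Matrix.cons_val_two, Matrix.tail_cons]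
  rw [e00, e01, e02, e10, e11, e12, e20, e21, e22, hc, hd]
  set t := Real.sqrt π with ht
  rw [← hsp]
  field_simp
  ring_nf


/-- **Determinant of the Jacobian of the reduced Casimir map `G = (G₃, G₄, G₅)`**, and its
invertibility when `B ≠ 0`, `Ω ≠ 0` and `Ω² ≠ 15/(44π)`. -/
theorem stmt16 (Ω : ℝ) : ∀ A B D : ℝ,
    (jacG Ω A B D).det =
      480 * Real.sqrt 3 * B ^ 3 * Ω ^ 4 * (44 * π * Ω ^ 2 - 15) / (3773 * π) ∧
    (B ≠ 0 → Ω ≠ 0 → Ω ^ 2 ≠ 15 / (44 * π) → IsUnit (jacG Ω A B D)) := by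
  intro A B D
  refine ⟨jacG_det_eq Ω A B D, ?_⟩
  intro hB hΩ hΩ2
  rw [Matrix.isUnit_iff_isUnit_det, isUnit_iff_ne_zero, jacG_det_eq]
  have hπ : π ≠ 0 := pi_ne_zero
  apply div_ne_zero
  · have h1 : (480 : ℝ) * Real.sqrt 3 ≠ 0 := by positivity
    have h2 : B ^ 3 ≠ 0 := pow_ne_zero _ hB
    have h3 : Ω ^ 4 ≠ 0 := pow_ne_zero _ hΩ
    have h4 : 44 * π * Ω ^ 2 - 15 ≠ 0 := by
      intro h
      apply hΩ2
      field_simp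
      linarith
    exact mul_ne_zero (mul_ne_zero (mul_ne_zero h1 h2) h3) h4
  · positivity
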